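/- Assume F : [0,T] × ℝ^{m×n} → ℝ^{m×n} is Lipschitz with constant L and bounded by B in Frobenius norm, the non-tangential part satisfies ‖(I − P(Y))F(t,Y)‖_F ≤ ε for rank-r matrices Y near the exact solution A(t) of A' = F(t,A), and A(t₀) = Y₀ with Y₀ of rank r. Then one step of the new low-rank integrator (K-step, L-step in parallel, followed by the Galerkin S-step with initial value MS₀Nᵀ) produces Y₁ of rank r satisfying the local error bound ‖Y₁ − A(t₀+h)‖_F ≤ h(ĉ₁ ε + ĉ₂ h), where ĉ₁, ĉ₂ depend only on L, B, and a bound on h, and are independent of the singular values of A or Y. -/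

import Mathlib

attribute [local instance] Matrix.frobeniusNormedAddCommGroup Matrix.frobeniusNormedSpace

open Matrix

/-- The orthogonal projection onto the tangent space at `Y = U S Vᵀ` of the manifold of
rank-`r` matrices: `P(Y) Z = U Uᵀ Z + Z V Vᵀ − U Uᵀ Z V Vᵀ`. -/
def tangentProj {m n r : ℕ} (U : Matrix (Fin m) (Fin r) ℝ) (V : Matrix (Fin n) (Fin r) ℝ)
    (Z : Matrix (Fin m) (Fin n) ℝ) : Matrix (Fin m) (Fin n) ℝ :=
  U * Uᵀ * Z + Z * (V * Vᵀ) - U * Uᵀ * Z * (V * Vᵀ)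

open Set

noncomputable section
variable {p q w r : ℕ}

/-- apply a linear map to a `HasDerivAt`. -/
theorem lin_deriv {E F : Type*} [NormedAddCommGroup E] [NormedSpace ℝ E]
    [FiniteDimensional ℝ E] [NormedAddCommGroup F] [NormedSpace ℝ F]
    (e : E →ₗ[ℝ] F) {f : ℝ → E} {f' : E} {x : ℝ} (hf : HasDerivAt f f' x) :
    HasDerivAt (fun t => e (f t)) (e f') x := by
  simpa [Function.comp_def] using (LinearMap.toContinuousLinearMap e).hasFDerivAt.comp_hasDerivAt x hf

def mulLlin (M : Matrix (Fin p) (Fin q) ℝ) :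
    Matrix (Fin q) (Fin w) ℝ →ₗ[ℝ] Matrix (Fin p) (Fin w) ℝ where
  toFun X := M * X
  map_add' X Y := Matrix.mul_add M X Y
  map_smul' c X := Matrix.mul_smul M c X

def mulRlin (M : Matrix (Fin q) (Fin w) ℝ) :
    Matrix (Fin p) (Fin q) ℝ →ₗ[ℝ] Matrix (Fin p) (Fin w) ℝ where
  toFun X := X * M
  map_add' X Y := Matrix.add_mul X Y M
  map_smul' c X := Matrix.smul_mul c X M

theorem hd_mulL (M : Matrix (Fin p) (Fin q) ℝ) {f : ℝ → Matrix (Fin q) (Fin w) ℝ}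
    {f' : Matrix (Fin q) (Fin w) ℝ} {x : ℝ} (hf : HasDerivAt f f' x) :
    HasDerivAt (fun t => M * f t) (M * f') x := lin_deriv (mulLlin M) hf

theorem hd_mulR (M : Matrix (Fin q) (Fin w) ℝ) {f : ℝ → Matrix (Fin p) (Fin q) ℝ}
    {f' : Matrix (Fin p) (Fin q) ℝ} {x : ℝ} (hf : HasDerivAt f f' x) :
    HasDerivAt (fun t => f t * M) (f' * M) x := lin_deriv (mulRlin M) hf

def trlin : Matrix (Fin p) (Fin q) ℝ →ₗ[ℝ] Matrix (Fin q) (Fin p) ℝ where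
  toFun X := Xᵀ
  map_add' X Y := Matrix.transpose_add X Y
  map_smul' c X := Matrix.transpose_smul c X

theorem hd_tr {f : ℝ → Matrix (Fin p) (Fin q) ℝ} {f' : Matrix (Fin p) (Fin q) ℝ} {x : ℝ}
    (hf : HasDerivAt f f' x) : HasDerivAt (fun t => (f t)ᵀ) f'ᵀ x := lin_deriv trlin hf

theorem mvt0 {E : Type*} [NormedAddCommGroup E] [NormedSpace ℝ E] {f f' : ℝ → E}
    {a b C : ℝ} (hd : ∀ t ∈ Icc a b, HasDerivAt f (f' t) t)
    (hb : ∀ t ∈ Icc a b, ‖f' t‖ ≤ C) :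
    ∀ t ∈ Icc a b, ‖f t - f a‖ ≤ C * (t - a) := fun t ht =>
  norm_image_sub_le_of_norm_deriv_le_segment'
    (fun x hx => (hd x hx).hasDerivWithinAt)
    (fun x hx => hb x (Ico_subset_Icc_self hx)) t ht

theorem nmul {a b : ℝ} {X : Matrix (Fin p) (Fin q) ℝ} {Y : Matrix (Fin q) (Fin w) ℝ}
    (hX : ‖X‖ ≤ a) (hY : ‖Y‖ ≤ b) (ha : 0 ≤ a) : ‖X * Y‖ ≤ a * b :=
  le_trans (Matrix.frobenius_norm_mul X Y)
    (mul_le_mul hX hY (norm_nonneg _) ha)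

theorem norm_orth {U : Matrix (Fin p) (Fin r) ℝ} (hU : Uᵀ * U = 1) :
    ‖U‖ ≤ (r : ℝ) + 1 := by
  have key : ∑ i, ∑ j, ‖U i j‖ ^ (2:ℝ) = (r : ℝ) := by
    rw [Finset.sum_comm]
    have : ∀ j, ∑ i, ‖U i j‖ ^ (2:ℝ) = 1 := by
      intro j
      have h1 : (Uᵀ * U) j j = 1 := by rw [hU]; simp
      rw [Matrix.mul_apply] at h1
      calc ∑ i, ‖U i j‖ ^ (2:ℝ) = ∑ i, Uᵀ j i * U i j := by
            apply Finset.sum_congr rfl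
            intro i _
            rw [Real.norm_eq_abs, Real.rpow_two, sq_abs, Matrix.transpose_apply]
            ring
        _ = 1 := h1
    rw [Finset.sum_congr rfl (fun j _ => this j)]
    simp
  rw [Matrix.frobenius_norm_def, key, ← Real.sqrt_eq_rpow]
  have h1 : Real.sqrt r ≤ Real.sqrt (((r:ℝ)+1)^2) := by
    apply Real.sqrt_le_sqrt; nlinarith [Nat.cast_nonneg (α := ℝ) r]
  have h2 : Real.sqrt (((r:ℝ)+1)^2) = (r:ℝ)+1 := by
    rw [Real.sqrt_sq]; positivity
  linarith

theorem cancel_orth {W : Matrix (Fin p) (Fin r) ℝ} (hW : Wᵀ * W = 1)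
    (Z : Matrix (Fin r) (Fin w) ℝ) : Wᵀ * (W * Z) = Z := by
  rw [← Matrix.mul_assoc, hW, Matrix.one_mul]

/-- the normal component `(I-UUᵀ) Z (I-VVᵀ)` written without identity matrices -/
def perpForm {m n : ℕ} (U : Matrix (Fin m) (Fin r) ℝ) (V : Matrix (Fin n) (Fin r) ℝ)
    (Z : Matrix (Fin m) (Fin n) ℝ) : Matrix (Fin m) (Fin n) ℝ :=
  (Z - Z * (V * Vᵀ)) - U * Uᵀ * (Z - Z * (V * Vᵀ))

def tangentProj' {m n r : ℕ} (U : Matrix (Fin m) (Fin r) ℝ) (V : Matrix (Fin n) (Fin r) ℝ)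
    (Z : Matrix (Fin m) (Fin n) ℝ) : Matrix (Fin m) (Fin n) ℝ :=
  U * Uᵀ * Z + Z * (V * Vᵀ) - U * Uᵀ * Z * (V * Vᵀ)

theorem perpForm_eq {m n : ℕ} (U : Matrix (Fin m) (Fin r) ℝ) (V : Matrix (Fin n) (Fin r) ℝ)
    (Z : Matrix (Fin m) (Fin n) ℝ) :
    perpForm U V Z = Z - tangentProj' U V Z := by
  unfold perpForm tangentProj'
  simp only [Matrix.mul_sub, Matrix.sub_mul, Matrix.mul_assoc]
  abel

theorem perpForm_sub {m n : ℕ} (U : Matrix (Fin m) (Fin r) ℝ) (V : Matrix (Fin n) (Fin r) ℝ)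
    (Z Z' : Matrix (Fin m) (Fin n) ℝ) :
    perpForm U V Z - perpForm U V Z' = perpForm U V (Z - Z') := by
  unfold perpForm
  simp only [Matrix.mul_sub, Matrix.sub_mul, Matrix.mul_assoc]
  abel

theorem perpForm_norm_le {m n : ℕ} {ρ : ℝ} (hρ : 0 ≤ ρ)
    {U : Matrix (Fin m) (Fin r) ℝ} {V : Matrix (Fin n) (Fin r) ℝ}
    (hU : ‖U‖ ≤ ρ) (hUt : ‖Uᵀ‖ ≤ ρ) (hV : ‖V‖ ≤ ρ) (hVt : ‖Vᵀ‖ ≤ ρ)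
    (Z : Matrix (Fin m) (Fin n) ℝ) :
    ‖perpForm U V Z‖ ≤ (1 + ρ^2)^2 * ‖Z‖ := by
  have h1 : ‖Z - Z * (V * Vᵀ)‖ ≤ (1 + ρ^2) * ‖Z‖ := by
    have := nmul (le_refl ‖Z‖) (nmul hV hVt hρ) (norm_nonneg Z)
    calc ‖Z - Z * (V * Vᵀ)‖ ≤ ‖Z‖ + ‖Z * (V * Vᵀ)‖ := norm_sub_le _ _
      _ ≤ ‖Z‖ + ‖Z‖ * (ρ * ρ) := by linarith
      _ = (1 + ρ^2) * ‖Z‖ := by ring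
  have hZ' := norm_nonneg (Z - Z * (V * Vᵀ))
  have h2 : ‖U * Uᵀ * (Z - Z * (V * Vᵀ))‖ ≤ ρ^2 * ‖Z - Z * (V * Vᵀ)‖ := by
    have := nmul (nmul hU hUt hρ) (le_refl ‖Z - Z * (V * Vᵀ)‖) (by positivity)
    calc ‖U * Uᵀ * (Z - Z * (V * Vᵀ))‖ ≤ ρ * ρ * ‖Z - Z * (V * Vᵀ)‖ := this
      _ = ρ^2 * ‖Z - Z * (V * Vᵀ)‖ := by ring
  have hρ2 : (0:ℝ) ≤ ρ^2 := by positivity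
  calc ‖perpForm U V Z‖ ≤ ‖Z - Z * (V * Vᵀ)‖ + ‖U * Uᵀ * (Z - Z * (V * Vᵀ))‖ :=
        norm_sub_le _ _
    _ ≤ (1 + ρ^2) * ‖Z‖ + ρ^2 * ((1 + ρ^2) * ‖Z‖) := by
        have : ρ^2 * ‖Z - Z * (V * Vᵀ)‖ ≤ ρ^2 * ((1 + ρ^2) * ‖Z‖) :=
          mul_le_mul_of_nonneg_left h1 hρ2
        linarith
    _ = (1 + ρ^2)^2 * ‖Z‖ := by ring

def perpLin {m n : ℕ} (U : Matrix (Fin m) (Fin r) ℝ) (V : Matrix (Fin n) (Fin r) ℝ) :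
    Matrix (Fin m) (Fin n) ℝ →ₗ[ℝ] Matrix (Fin m) (Fin n) ℝ where
  toFun Z := perpForm U V Z
  map_add' Z Z' := by
    unfold perpForm
    simp only [Matrix.mul_add, Matrix.add_mul, Matrix.mul_sub, Matrix.sub_mul,
      Matrix.mul_assoc]
    abel
  map_smul' c Z := by
    unfold perpForm
    simp only [RingHom.id_apply, smul_sub, Matrix.mul_sub, Matrix.mul_smul, Matrix.smul_mul]

/-- every square matrix is the limit of invertible ones: quantitative version -/
theorem exists_invertible_pert (Sm : Matrix (Fin r) (Fin r) ℝ) {δ : ℝ} (hδ : 0 < δ) :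
    ∃ μ : ℝ, 0 < μ ∧ μ < δ ∧ ∃ _ : Invertible (Sm + μ • (1 : Matrix (Fin r) (Fin r) ℝ)), True := by
  classical
  set q : Polynomial ℝ := (-Sm).charpoly with hq
  have hq0 : q ≠ 0 := (Matrix.charpoly_monic _).ne_zero
  have hfin : {x : ℝ | q.IsRoot x}.Finite := Polynomial.finite_setOf_isRoot hq0
  have hinf : (Ioo (0:ℝ) δ).Infinite := Set.Ioo_infinite hδ
  obtain ⟨μ, hμ⟩ := (hinf.diff hfin).nonempty
  refine ⟨μ, hμ.1.1, hμ.1.2, ?_, trivial⟩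
  have heval : q.eval μ = (Sm + μ • (1 : Matrix (Fin r) (Fin r) ℝ)).det := by
    have h1 := RingHom.map_det (Polynomial.evalRingHom μ) (charmatrix (-Sm))
    simp only [RingHom.mapMatrix_apply, Polynomial.coe_evalRingHom] at h1
    rw [hq, Matrix.charpoly, h1]
    congr 1
    ext i j
    by_cases hij : i = j <;>
      simp [charmatrix_apply, Matrix.diagonal_apply, hij, Matrix.one_apply,
        Matrix.smul_apply, add_comm]
  have hne : (Sm + μ • (1 : Matrix (Fin r) (Fin r) ℝ)).det ≠ 0 := by
    rw [← heval]
    exact fun hc => hμ.2 hc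
  exact Matrix.invertibleOfIsUnitDet _ (isUnit_iff_ne_zero.mpr hne)

theorem eps_drop {m n r : ℕ} {T L ε : ℝ} (hL : 0 ≤ L)
    (F : ℝ → Matrix (Fin m) (Fin n) ℝ → Matrix (Fin m) (Fin n) ℝ)
    (hFlip : ∀ t ∈ Icc (0:ℝ) T, ∀ Y Y' : Matrix (Fin m) (Fin n) ℝ,
      ‖F t Y - F t Y'‖ ≤ L * ‖Y - Y'‖)
    (hFeps : ∀ t ∈ Icc (0:ℝ) T, ∀ (U : Matrix (Fin m) (Fin r) ℝ)
      (Sm : Matrix (Fin r) (Fin r) ℝ) (V : Matrix (Fin n) (Fin r) ℝ),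
      Uᵀ * U = 1 → Vᵀ * V = 1 → Invertible Sm →
      ‖F t (U * Sm * Vᵀ) - tangentProj' U V (F t (U * Sm * Vᵀ))‖ ≤ ε) :
    ∀ t ∈ Icc (0:ℝ) T, ∀ (U : Matrix (Fin m) (Fin r) ℝ)
      (Sm : Matrix (Fin r) (Fin r) ℝ) (V : Matrix (Fin n) (Fin r) ℝ),
      Uᵀ * U = 1 → Vᵀ * V = 1 →
      ‖F t (U * Sm * Vᵀ) - tangentProj' U V (F t (U * Sm * Vᵀ))‖ ≤ ε := by
  intro t ht U Sm V hU hV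
  set ρ : ℝ := (r : ℝ) + 1 with hρdef
  have hρ : (0:ℝ) ≤ ρ := by positivity
  have hU' : ‖U‖ ≤ ρ := norm_orth hU
  have hUt : ‖Uᵀ‖ ≤ ρ := by rw [Matrix.frobenius_norm_transpose]; exact hU'
  have hV' : ‖V‖ ≤ ρ := norm_orth hV
  have hVt : ‖Vᵀ‖ ≤ ρ := by rw [Matrix.frobenius_norm_transpose]; exact hV'
  apply le_of_forall_pos_le_add
  intro δ hδ
  set C : ℝ := (1 + ρ^2)^2 * L * ρ^2 with hCdef
  have hC : 0 ≤ C := by positivity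
  have hδ' : (0:ℝ) < δ / (C + 1) := by positivity
  obtain ⟨μ, hμ0, hμδ, hinv, -⟩ := exists_invertible_pert Sm hδ'
  have hb := hFeps t ht U (Sm + μ • 1) V hU hV hinv
  set Y := U * Sm * Vᵀ with hY
  set Y' := U * (Sm + μ • 1) * Vᵀ with hY'
  have hYdiff : Y - Y' = -(μ • (U * Vᵀ)) := by
    rw [hY, hY', Matrix.mul_add, Matrix.add_mul]
    simp only [Matrix.mul_smul, Matrix.smul_mul, Matrix.mul_one]
    abel
  have hYnorm : ‖Y - Y'‖ ≤ μ * ρ^2 := by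
    rw [hYdiff, norm_neg, norm_smul, Real.norm_eq_abs, abs_of_pos hμ0]
    have : ‖U * Vᵀ‖ ≤ ρ * ρ := nmul hU' hVt hρ
    have h2 : μ * ‖U * Vᵀ‖ ≤ μ * (ρ * ρ) := by
      apply mul_le_mul_of_nonneg_left this (le_of_lt hμ0)
    calc μ * ‖U * Vᵀ‖ ≤ μ * (ρ * ρ) := h2
      _ = μ * ρ^2 := by ring
  calc ‖F t Y - tangentProj' U V (F t Y)‖
      ≤ ‖F t Y' - tangentProj' U V (F t Y')‖
        + ‖(F t Y - tangentProj' U V (F t Y)) - (F t Y' - tangentProj' U V (F t Y'))‖ :=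
        norm_le_norm_add_norm_sub' _ _
    _ ≤ ε + δ := by
        have hkey : (F t Y - tangentProj' U V (F t Y)) - (F t Y' - tangentProj' U V (F t Y'))
            = perpForm U V (F t Y - F t Y') := by
          rw [← perpForm_eq, ← perpForm_eq, perpForm_sub]
        have h1 : ‖perpForm U V (F t Y - F t Y')‖ ≤ (1 + ρ^2)^2 * ‖F t Y - F t Y'‖ :=
          perpForm_norm_le hρ hU' hUt hV' hVt _
        have h2 : ‖F t Y - F t Y'‖ ≤ L * (μ * ρ^2) :=
          le_trans (hFlip t ht Y Y') (mul_le_mul_of_nonneg_left hYnorm hL)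
        have h3 : (1 + ρ^2)^2 * ‖F t Y - F t Y'‖ ≤ C * μ := by
          calc (1 + ρ^2)^2 * ‖F t Y - F t Y'‖ ≤ (1 + ρ^2)^2 * (L * (μ * ρ^2)) :=
                mul_le_mul_of_nonneg_left h2 (by positivity)
            _ = C * μ := by rw [hCdef]; ring
        have h4 : C * μ ≤ δ := by
          have : C * μ ≤ C * (δ / (C + 1)) :=
            mul_le_mul_of_nonneg_left (le_of_lt hμδ) hC
          calc C * μ ≤ C * (δ / (C + 1)) := this
            _ ≤ δ := by
                have hCp : (0:ℝ) < C + 1 := by linarith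
                have heq : C * (δ / (C + 1)) = δ * (C / (C + 1)) := by ring
                have h5 : C / (C + 1) ≤ 1 := by rw [div_le_one hCp]; linarith
                rw [heq]
                nlinarith [le_of_lt hδ]
        rw [hkey]
        linarith

theorem nPU {m n : ℕ} {ρ : ℝ} (hρ : 0 ≤ ρ) {U : Matrix (Fin m) (Fin r) ℝ}
    (hU : ‖U‖ ≤ ρ) (hUt : ‖Uᵀ‖ ≤ ρ) {X : Matrix (Fin m) (Fin n) ℝ} {a' : ℝ}
    (hX : ‖X‖ ≤ a') : ‖U * Uᵀ * X‖ ≤ ρ^2 * a' := by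
  have := nmul (nmul hU hUt hρ) hX (mul_nonneg hρ hρ)
  calc ‖U * Uᵀ * X‖ ≤ ρ * ρ * a' := this
    _ = ρ^2 * a' := by ring

theorem nPV {m n : ℕ} {ρ : ℝ} (hρ : 0 ≤ ρ) {V : Matrix (Fin n) (Fin r) ℝ}
    (hV : ‖V‖ ≤ ρ) (hVt : ‖Vᵀ‖ ≤ ρ) {X : Matrix (Fin m) (Fin n) ℝ} {a' : ℝ}
    (hX : ‖X‖ ≤ a') : ‖X * (V * Vᵀ)‖ ≤ ρ^2 * a' := by
  have ha' : 0 ≤ a' := le_trans (norm_nonneg X) hX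
  have := nmul hX (nmul hV hVt hρ) ha'
  calc ‖X * (V * Vᵀ)‖ ≤ a' * (ρ * ρ) := this
    _ = ρ^2 * a' := by ring

theorem nIPU {m n : ℕ} {ρ : ℝ} (hρ : 0 ≤ ρ) {U : Matrix (Fin m) (Fin r) ℝ}
    (hU : ‖U‖ ≤ ρ) (hUt : ‖Uᵀ‖ ≤ ρ) {X : Matrix (Fin m) (Fin n) ℝ} {a' : ℝ}
    (hX : ‖X‖ ≤ a') : ‖X - U * Uᵀ * X‖ ≤ (1 + ρ^2) * a' := by
  have h2 := nPU hρ hU hUt hX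
  calc ‖X - U * Uᵀ * X‖ ≤ ‖X‖ + ‖U * Uᵀ * X‖ := norm_sub_le _ _
    _ ≤ a' + ρ^2 * a' := by linarith
    _ = (1 + ρ^2) * a' := by ring

theorem nIPV {m n : ℕ} {ρ : ℝ} (hρ : 0 ≤ ρ) {V : Matrix (Fin n) (Fin r) ℝ}
    (hV : ‖V‖ ≤ ρ) (hVt : ‖Vᵀ‖ ≤ ρ) {X : Matrix (Fin m) (Fin n) ℝ} {a' : ℝ}
    (hX : ‖X‖ ≤ a') : ‖X - X * (V * Vᵀ)‖ ≤ (1 + ρ^2) * a' := by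
  have h2 := nPV hρ hV hVt hX
  calc ‖X - X * (V * Vᵀ)‖ ≤ ‖X‖ + ‖X * (V * Vᵀ)‖ := norm_sub_le _ _
    _ ≤ a' + ρ^2 * a' := by linarith
    _ = (1 + ρ^2) * a' := by ring

end

/-- local error bound `‖Y₁ − A(t₀+h)‖ ≤ h (ĉ₁ ε + ĉ₂ h)` for one step of the
new low-rank integrator (K-step and L-step in parallel, followed by the Galerkin S-step with
initial value `M S₀ Nᵀ`), with constants depending only on `L`, `B` and a bound `h_max` on
the step size, independent of singular values. -/
theorem stmt10 {m n r : ℕ} (T L B hmax : ℝ) (hL : 0 ≤ L) (hB : 0 ≤ B) (hmax_pos : 0 < hmax) :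
    ∃ c₁ c₂ : ℝ, ∀ (ε t₀ h : ℝ), 0 < h → h ≤ hmax → 0 ≤ t₀ → t₀ + h ≤ T →
      ∀ (F : ℝ → Matrix (Fin m) (Fin n) ℝ → Matrix (Fin m) (Fin n) ℝ)
        (A : ℝ → Matrix (Fin m) (Fin n) ℝ)
        (U₀ : Matrix (Fin m) (Fin r) ℝ) (S₀ : Matrix (Fin r) (Fin r) ℝ)
        (V₀ : Matrix (Fin n) (Fin r) ℝ)
        (K Lmat : ℝ → _) (U₁ : Matrix (Fin m) (Fin r) ℝ) (R₁ : Matrix (Fin r) (Fin r) ℝ)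
        (V₁ : Matrix (Fin n) (Fin r) ℝ) (R₁' : Matrix (Fin r) (Fin r) ℝ)
        (S : ℝ → Matrix (Fin r) (Fin r) ℝ) (Y₁ : Matrix (Fin m) (Fin n) ℝ),
      -- F is Lipschitz and bounded in the Frobenius norm
      (∀ t ∈ Set.Icc (0:ℝ) T, ∀ Y Y' : Matrix (Fin m) (Fin n) ℝ,
        ‖F t Y - F t Y'‖ ≤ L * ‖Y - Y'‖) →
      (∀ t ∈ Set.Icc (0:ℝ) T, ∀ Y : Matrix (Fin m) (Fin n) ℝ, ‖F t Y‖ ≤ B) →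
      -- the non-tangential part of F is ε-small on the rank-r manifold
      (∀ t ∈ Set.Icc (0:ℝ) T, ∀ (U : Matrix (Fin m) (Fin r) ℝ)
        (Sm : Matrix (Fin r) (Fin r) ℝ) (V : Matrix (Fin n) (Fin r) ℝ),
        Uᵀ * U = 1 → Vᵀ * V = 1 → Invertible Sm →
        ‖F t (U * Sm * Vᵀ) - tangentProj U V (F t (U * Sm * Vᵀ))‖ ≤ ε) →
      -- A solves the full problem with rank-r initial value Y₀ = U₀ S₀ V₀ᵀ = A(t₀)
      (∀ t ∈ Set.Icc t₀ (t₀ + h), HasDerivAt A (F t (A t)) t) →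
      U₀ᵀ * U₀ = 1 → V₀ᵀ * V₀ = 1 → Invertible S₀ →
      A t₀ = U₀ * S₀ * V₀ᵀ →
      -- K-step: K' = F(t, K V₀ᵀ) V₀, K(t₀) = U₀ S₀, QR: K(t₁) = U₁ R₁
      K t₀ = U₀ * S₀ →
      (∀ t ∈ Set.Icc t₀ (t₀ + h), HasDerivAt K (F t (K t * V₀ᵀ) * V₀) t) →
      K (t₀ + h) = U₁ * R₁ → U₁ᵀ * U₁ = 1 →
      -- L-step: L' = F(t, U₀ Lᵀ)ᵀ U₀, L(t₀) = V₀ S₀ᵀ, QR: L(t₁) = V₁ R̃₁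
      Lmat t₀ = V₀ * S₀ᵀ →
      (∀ t ∈ Set.Icc t₀ (t₀ + h), HasDerivAt Lmat ((F t (U₀ * (Lmat t)ᵀ))ᵀ * U₀) t) →
      Lmat (t₀ + h) = V₁ * R₁' → V₁ᵀ * V₁ = 1 →
      -- S-step: S' = U₁ᵀ F(t, U₁ S V₁ᵀ) V₁, S(t₀) = M S₀ Nᵀ with M = U₁ᵀU₀, N = V₁ᵀV₀
      S t₀ = (U₁ᵀ * U₀) * S₀ * (V₁ᵀ * V₀)ᵀ →
      (∀ t ∈ Set.Icc t₀ (t₀ + h), HasDerivAt S (U₁ᵀ * F t (U₁ * S t * V₁ᵀ) * V₁) t) →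
      -- result of one step
      Y₁ = U₁ * S (t₀ + h) * V₁ᵀ →
      ‖Y₁ - A (t₀ + h)‖ ≤ h * (c₁ * ε + c₂ * h) := by
  classical
  obtain ⟨ρ, hρdef⟩ : ∃ x : ℝ, x = (r : ℝ) + 1 := ⟨_, rfl⟩
  have hρ0 : (0:ℝ) ≤ ρ := by rw [hρdef]; positivity
  have hρ20 : (0:ℝ) ≤ ρ^2 := by positivity
  obtain ⟨κ', hκ'⟩ : ∃ x : ℝ, x = (1 + ρ^2) * (ρ^2 * B) := ⟨_, rfl⟩
  obtain ⟨C₂, hC₂def⟩ : ∃ x : ℝ, x = ρ^4*B + (1+ρ^2)*κ' + B := ⟨_, rfl⟩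
  obtain ⟨CΘ, hCΘdef⟩ : ∃ x : ℝ, x = ρ^2*L*(1+ρ^2)*B := ⟨_, rfl⟩
  obtain ⟨CΞ, hCΞdef⟩ : ∃ x : ℝ, x = (1+ρ^2)^2*(ρ^2*L*B) := ⟨_, rfl⟩
  obtain ⟨CG, hCGdef⟩ : ∃ x : ℝ, x = (1+ρ^2)^2*L*(B+κ') := ⟨_, rfl⟩
  have hκ'0 : 0 ≤ κ' := by rw [hκ']; positivity
  have hC₂0 : 0 ≤ C₂ := by
    rw [hC₂def]
    have h1 : 0 ≤ ρ^4*B := by positivity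
    have h2 : 0 ≤ (1+ρ^2)*κ' := mul_nonneg (by positivity) hκ'0
    linarith
  refine ⟨1+ρ^2, ρ^4*L*C₂ + (1+ρ^2)*CΘ + CG + ρ^2*CΞ + ρ^2*CG, ?_⟩
  intro ε t₀ h hh hhm ht₀ htT F A U₀ S₀ V₀ K Lm U₁ R₁ V₁ R₁' S Y₁
  intro hFlip hFbd hFeps0 hAode hU₀ hV₀ hS₀inv hA₀ hK₀ hKode hK₁ hU₁ hL₀ hLode hL₁ hV₁ hS₀ hSode hY₁
  have hsub : Set.Icc t₀ (t₀+h) ⊆ Set.Icc (0:ℝ) T := fun t ht =>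
    ⟨le_trans ht₀ ht.1, le_trans ht.2 htT⟩
  have ht₀m : t₀ ∈ Set.Icc t₀ (t₀+h) := ⟨le_refl _, by linarith⟩
  have ht₁m : t₀+h ∈ Set.Icc t₀ (t₀+h) := ⟨by linarith, le_refl _⟩
  have hh0 : 0 ≤ h := hh.le
  -- norms of the orthonormal factors
  have nU₀ : ‖U₀‖ ≤ ρ := by rw [hρdef]; exact norm_orth hU₀
  have nU₀t : ‖U₀ᵀ‖ ≤ ρ := by rw [Matrix.frobenius_norm_transpose]; exact nU₀
  have nV₀ : ‖V₀‖ ≤ ρ := by rw [hρdef]; exact norm_orth hV₀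
  have nV₀t : ‖V₀ᵀ‖ ≤ ρ := by rw [Matrix.frobenius_norm_transpose]; exact nV₀
  have nU₁ : ‖U₁‖ ≤ ρ := by rw [hρdef]; exact norm_orth hU₁
  have nU₁t : ‖U₁ᵀ‖ ≤ ρ := by rw [Matrix.frobenius_norm_transpose]; exact nU₁
  have nV₁ : ‖V₁‖ ≤ ρ := by rw [hρdef]; exact norm_orth hV₁
  have nV₁t : ‖V₁ᵀ‖ ≤ ρ := by rw [Matrix.frobenius_norm_transpose]; exact nV₁
  -- the ε-condition without invertibility
  have hFeps : ∀ t ∈ Set.Icc (0:ℝ) T, ∀ (U : Matrix (Fin m) (Fin r) ℝ)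
      (Sm : Matrix (Fin r) (Fin r) ℝ) (V : Matrix (Fin n) (Fin r) ℝ),
      Uᵀ * U = 1 → Vᵀ * V = 1 →
      ‖F t (U * Sm * Vᵀ) - tangentProj' U V (F t (U * Sm * Vᵀ))‖ ≤ ε := by
    apply eps_drop hL F hFlip
    intro t ht U Sm V hU hV hinv
    exact hFeps0 t ht U Sm V hU hV hinv
  -- first-order a priori bounds
  have aA : ∀ t ∈ Set.Icc t₀ (t₀+h), ‖A t - A t₀‖ ≤ B * h := by
    intro t ht
    have h1 := mvt0 (f' := fun t => F t (A t)) hAode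
      (fun s hs => hFbd s (hsub hs) (A s)) t ht
    calc ‖A t - A t₀‖ ≤ B * (t - t₀) := h1
      _ ≤ B * h := mul_le_mul_of_nonneg_left (by have := ht.2; linarith) hB
  have aK : ∀ t ∈ Set.Icc t₀ (t₀+h), ‖K t - K t₀‖ ≤ B * ρ * h := by
    intro t ht
    have h1 := mvt0 (f' := fun t => F t (K t * V₀ᵀ) * V₀) hKode
      (fun s hs => nmul (hFbd s (hsub hs) _) nV₀ hB) t ht
    calc ‖K t - K t₀‖ ≤ B * ρ * (t - t₀) := h1
      _ ≤ B * ρ * h := mul_le_mul_of_nonneg_left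
          (by have := ht.2; linarith) (mul_nonneg hB hρ0)
  have aL : ∀ t ∈ Set.Icc t₀ (t₀+h), ‖Lm t - Lm t₀‖ ≤ B * ρ * h := by
    intro t ht
    have h1 := mvt0 (f' := fun t => (F t (U₀ * (Lm t)ᵀ))ᵀ * U₀) hLode
      (fun s hs => nmul (by rw [Matrix.frobenius_norm_transpose]; exact hFbd s (hsub hs) _)
        nU₀ hB) t ht
    calc ‖Lm t - Lm t₀‖ ≤ B * ρ * (t - t₀) := h1
      _ ≤ B * ρ * h := mul_le_mul_of_nonneg_left
          (by have := ht.2; linarith) (mul_nonneg hB hρ0)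
  have aS : ∀ t ∈ Set.Icc t₀ (t₀+h), ‖S t - S t₀‖ ≤ ρ * B * ρ * h := by
    intro t ht
    have h1 := mvt0 (f' := fun t => U₁ᵀ * F t (U₁ * S t * V₁ᵀ) * V₁) hSode
      (fun s hs => nmul (nmul nU₁t (hFbd s (hsub hs) _) hρ0) nV₁
        (mul_nonneg hρ0 hB)) t ht
    calc ‖S t - S t₀‖ ≤ ρ * B * ρ * (t - t₀) := h1
      _ ≤ ρ * B * ρ * h := mul_le_mul_of_nonneg_left
          (by have := ht.2; linarith)
          (mul_nonneg (mul_nonneg hρ0 hB) hρ0)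
  -- identifications of the initial values
  have hKA : K t₀ * V₀ᵀ = A t₀ := by rw [hK₀, hA₀]
  have hLA : U₀ * (Lm t₀)ᵀ = A t₀ := by
    rw [hL₀, hA₀, Matrix.transpose_mul, Matrix.transpose_transpose, Matrix.mul_assoc]
  -- distance of K V₀ᵀ and U₀ Lᵀ to A t₀
  have b1 : ∀ t ∈ Set.Icc t₀ (t₀+h), ‖K t * V₀ᵀ - A t₀‖ ≤ B * ρ * h * ρ := by
    intro t ht
    have hkey : K t * V₀ᵀ - A t₀ = (K t - K t₀) * V₀ᵀ := by
      rw [← hKA, Matrix.sub_mul]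
    rw [hkey]
    exact nmul (aK t ht) nV₀t (mul_nonneg (mul_nonneg hB hρ0) hh0)
  have b2 : ∀ t ∈ Set.Icc t₀ (t₀+h), ‖U₀ * (Lm t)ᵀ - A t₀‖ ≤ ρ * (B * ρ * h) := by
    intro t ht
    have hkey : U₀ * (Lm t)ᵀ - A t₀ = U₀ * (Lm t - Lm t₀)ᵀ := by
      rw [← hLA, ← Matrix.mul_sub, Matrix.transpose_sub]
    rw [hkey]
    refine nmul nU₀ ?_ hρ0
    rw [Matrix.frobenius_norm_transpose]; exact aL t ht
  -- the ranges of U₁ and V₁ nearly contain range/corange of A t₀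
  have c1' : ‖A t₀ - U₁ * U₁ᵀ * A t₀‖ ≤ κ' * h := by
    have key : A t₀ - U₁ * U₁ᵀ * A t₀
        = (K t₀ - K (t₀+h)) * V₀ᵀ - U₁ * U₁ᵀ * ((K t₀ - K (t₀+h)) * V₀ᵀ) := by
      rw [← hKA, hK₁]
      simp only [Matrix.sub_mul, Matrix.mul_sub, Matrix.mul_assoc, cancel_orth hU₁]
      abel
    rw [key]
    have hX : ‖(K t₀ - K (t₀+h)) * V₀ᵀ‖ ≤ B * ρ * h * ρ := by
      refine nmul ?_ nV₀t (mul_nonneg (mul_nonneg hB hρ0) hh0)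
      rw [norm_sub_rev]; exact aK (t₀+h) ht₁m
    refine le_trans (nIPU hρ0 nU₁ nU₁t hX) (le_of_eq ?_)
    rw [hκ']; ring
  have c2' : ‖A t₀ - A t₀ * (V₁ * V₁ᵀ)‖ ≤ κ' * h := by
    have key : A t₀ - A t₀ * (V₁ * V₁ᵀ)
        = U₀ * (Lm t₀ - Lm (t₀+h))ᵀ - (U₀ * (Lm t₀ - Lm (t₀+h))ᵀ) * (V₁ * V₁ᵀ) := by
      rw [← hLA, hL₁]
      simp only [Matrix.transpose_sub, Matrix.transpose_mul, Matrix.mul_sub,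
        Matrix.sub_mul, Matrix.mul_assoc, cancel_orth hV₁]
      abel
    rw [key]
    have hX : ‖U₀ * (Lm t₀ - Lm (t₀+h))ᵀ‖ ≤ ρ * (B * ρ * h) := by
      refine nmul nU₀ ?_ hρ0
      rw [Matrix.frobenius_norm_transpose, norm_sub_rev]
      exact aL (t₀+h) ht₁m
    refine le_trans (nIPV hρ0 nV₁ nV₁t hX) (le_of_eq ?_)
    rw [hκ']; ring
  -- distance of the Galerkin approximation to A
  have hYid : U₁ * S t₀ * V₁ᵀ = U₁ * U₁ᵀ * (A t₀ * (V₁ * V₁ᵀ)) := by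
    rw [hS₀, hA₀]
    simp only [Matrix.transpose_mul, Matrix.transpose_transpose, Matrix.mul_assoc]
  have dYA : ∀ t ∈ Set.Icc t₀ (t₀+h), ‖U₁ * S t * V₁ᵀ - A t‖ ≤ C₂ * h := by
    intro t ht
    have p1 : ‖U₁ * S t * V₁ᵀ - U₁ * S t₀ * V₁ᵀ‖ ≤ ρ * (ρ * B * ρ * h) * ρ := by
      have hkey : U₁ * S t * V₁ᵀ - U₁ * S t₀ * V₁ᵀ = U₁ * (S t - S t₀) * V₁ᵀ := by
        rw [Matrix.mul_sub, Matrix.sub_mul]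
      rw [hkey]
      exact nmul (nmul nU₁ (aS t ht) hρ0) nV₁t
        (mul_nonneg hρ0 (mul_nonneg (mul_nonneg (mul_nonneg hρ0 hB) hρ0) hh0))
    have p2 : ‖U₁ * S t₀ * V₁ᵀ - A t₀‖ ≤ ρ^2*(κ'*h) + κ'*h := by
      rw [hYid]
      have q1 : ‖U₁ * U₁ᵀ * (A t₀ * (V₁ * V₁ᵀ)) - U₁ * U₁ᵀ * A t₀‖ ≤ ρ^2*(κ'*h) := by
        rw [← Matrix.mul_sub]
        refine nPU hρ0 nU₁ nU₁t ?_
        rw [norm_sub_rev]; exact c2'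
      have q2 : ‖U₁ * U₁ᵀ * A t₀ - A t₀‖ ≤ κ'*h := by rw [norm_sub_rev]; exact c1'
      calc ‖U₁ * U₁ᵀ * (A t₀ * (V₁ * V₁ᵀ)) - A t₀‖
          ≤ ‖U₁ * U₁ᵀ * (A t₀ * (V₁ * V₁ᵀ)) - U₁ * U₁ᵀ * A t₀‖
            + ‖U₁ * U₁ᵀ * A t₀ - A t₀‖ := norm_sub_le_norm_sub_add_norm_sub _ _ _
        _ ≤ ρ^2*(κ'*h) + κ'*h := add_le_add q1 q2
    have p3 : ‖A t₀ - A t‖ ≤ B * h := by rw [norm_sub_rev]; exact aA t ht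
    calc ‖U₁ * S t * V₁ᵀ - A t‖
        ≤ ‖U₁ * S t * V₁ᵀ - U₁ * S t₀ * V₁ᵀ‖ + ‖U₁ * S t₀ * V₁ᵀ - A t‖ :=
          norm_sub_le_norm_sub_add_norm_sub _ _ _
      _ ≤ ‖U₁ * S t * V₁ᵀ - U₁ * S t₀ * V₁ᵀ‖
          + (‖U₁ * S t₀ * V₁ᵀ - A t₀‖ + ‖A t₀ - A t‖) := by
          have := norm_sub_le_norm_sub_add_norm_sub (U₁ * S t₀ * V₁ᵀ) (A t₀) (A t)
          linarith
      _ ≤ ρ * (ρ * B * ρ * h) * ρ + (ρ^2*(κ'*h) + κ'*h + B * h) := by linarith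
      _ = C₂ * h := by rw [hC₂def]; ring
  -- the Θ bound (L-step captures the U₀-component of A)
  have bΘ : ‖U₀ * U₀ᵀ * A (t₀+h) - U₀ * (Lm (t₀+h))ᵀ‖ ≤ CΘ * h * h := by
    have hzero : U₀ * U₀ᵀ * A t₀ - U₀ * (Lm t₀)ᵀ = 0 := by
      rw [hL₀, hA₀]
      simp only [Matrix.transpose_mul, Matrix.transpose_transpose, Matrix.mul_assoc,
        cancel_orth hU₀]
      exact sub_self _
    have hder : ∀ t ∈ Set.Icc t₀ (t₀+h),
        HasDerivAt (fun s => U₀ * U₀ᵀ * A s - U₀ * (Lm s)ᵀ)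
          (U₀ * U₀ᵀ * F t (A t) - U₀ * ((F t (U₀ * (Lm t)ᵀ))ᵀ * U₀)ᵀ) t := fun t ht =>
      (hd_mulL (U₀ * U₀ᵀ) (hAode t ht)).sub (hd_mulL U₀ (hd_tr (hLode t ht)))
    have hbd : ∀ t ∈ Set.Icc t₀ (t₀+h),
        ‖U₀ * U₀ᵀ * F t (A t) - U₀ * ((F t (U₀ * (Lm t)ᵀ))ᵀ * U₀)ᵀ‖ ≤ CΘ * h := by
      intro t ht
      have hkey : U₀ * U₀ᵀ * F t (A t) - U₀ * ((F t (U₀ * (Lm t)ᵀ))ᵀ * U₀)ᵀ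
          = U₀ * (U₀ᵀ * (F t (A t) - F t (U₀ * (Lm t)ᵀ))) := by
        simp only [Matrix.transpose_mul, Matrix.transpose_transpose, Matrix.mul_sub,
          Matrix.mul_assoc]
      rw [hkey]
      have hdist : ‖A t - U₀ * (Lm t)ᵀ‖ ≤ B * h + ρ * (B * ρ * h) := by
        have q1 := b2 t ht
        rw [norm_sub_rev] at q1
        have q2 := aA t ht
        have := norm_sub_le_norm_sub_add_norm_sub (A t) (A t₀) (U₀ * (Lm t)ᵀ)
        linarith
      have hlip : ‖F t (A t) - F t (U₀ * (Lm t)ᵀ)‖ ≤ L * (B * h + ρ * (B * ρ * h)) :=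
        le_trans (hFlip t (hsub ht) _ _) (mul_le_mul_of_nonneg_left hdist hL)
      refine le_trans (nmul nU₀ (nmul nU₀t hlip hρ0) hρ0) (le_of_eq ?_)
      rw [hCΘdef]; ring
    have hres := mvt0 hder hbd (t₀+h) ht₁m
    rw [hzero, sub_zero, add_sub_cancel_left] at hres
    exact hres
  -- the Ξ bound (K-step captures the V₀-component of A up to range of U₁)
  have bΞ : ‖(A (t₀+h) * (V₀ * V₀ᵀ) - K (t₀+h) * V₀ᵀ)
      - U₁ * U₁ᵀ * (A (t₀+h) * (V₀ * V₀ᵀ) - K (t₀+h) * V₀ᵀ)‖ ≤ CΞ * h * h := by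
    have hinner0 : A t₀ * (V₀ * V₀ᵀ) - K t₀ * V₀ᵀ = 0 := by
      rw [hK₀, hA₀]
      simp only [Matrix.mul_assoc, cancel_orth hV₀]
      exact sub_self _
    have hzero : (A t₀ * (V₀ * V₀ᵀ) - K t₀ * V₀ᵀ)
        - U₁ * U₁ᵀ * (A t₀ * (V₀ * V₀ᵀ) - K t₀ * V₀ᵀ) = 0 := by
      rw [hinner0, Matrix.mul_zero, sub_zero]
    have hder : ∀ t ∈ Set.Icc t₀ (t₀+h),
        HasDerivAt (fun s => (A s * (V₀ * V₀ᵀ) - K s * V₀ᵀ)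
            - U₁ * U₁ᵀ * (A s * (V₀ * V₀ᵀ) - K s * V₀ᵀ))
          ((F t (A t) * (V₀ * V₀ᵀ) - F t (K t * V₀ᵀ) * V₀ * V₀ᵀ)
            - U₁ * U₁ᵀ * (F t (A t) * (V₀ * V₀ᵀ) - F t (K t * V₀ᵀ) * V₀ * V₀ᵀ)) t := by
      intro t ht
      have hinner : HasDerivAt (fun s => A s * (V₀ * V₀ᵀ) - K s * V₀ᵀ)
          (F t (A t) * (V₀ * V₀ᵀ) - F t (K t * V₀ᵀ) * V₀ * V₀ᵀ) t :=
        (hd_mulR (V₀ * V₀ᵀ) (hAode t ht)).sub (hd_mulR V₀ᵀ (hKode t ht))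
      exact hinner.sub (hd_mulL (U₁ * U₁ᵀ) hinner)
    have hbd : ∀ t ∈ Set.Icc t₀ (t₀+h),
        ‖(F t (A t) * (V₀ * V₀ᵀ) - F t (K t * V₀ᵀ) * V₀ * V₀ᵀ)
          - U₁ * U₁ᵀ * (F t (A t) * (V₀ * V₀ᵀ) - F t (K t * V₀ᵀ) * V₀ * V₀ᵀ)‖ ≤ CΞ * h := by
      intro t ht
      have hkey : F t (A t) * (V₀ * V₀ᵀ) - F t (K t * V₀ᵀ) * V₀ * V₀ᵀ
          = (F t (A t) - F t (K t * V₀ᵀ)) * (V₀ * V₀ᵀ) := by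
        rw [Matrix.sub_mul]
        simp only [Matrix.mul_assoc]
      rw [hkey]
      have hdist : ‖A t - K t * V₀ᵀ‖ ≤ B * h + B * ρ * h * ρ := by
        have q1 := b1 t ht
        rw [norm_sub_rev] at q1
        have q2 := aA t ht
        have := norm_sub_le_norm_sub_add_norm_sub (A t) (A t₀) (K t * V₀ᵀ)
        linarith
      have hlip : ‖F t (A t) - F t (K t * V₀ᵀ)‖ ≤ L * (B * h + B * ρ * h * ρ) :=
        le_trans (hFlip t (hsub ht) _ _) (mul_le_mul_of_nonneg_left hdist hL)
      have hX : ‖(F t (A t) - F t (K t * V₀ᵀ)) * (V₀ * V₀ᵀ)‖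
          ≤ (L * (B * h + B * ρ * h * ρ)) * (ρ * ρ) := by
        refine nmul hlip (nmul nV₀ nV₀t hρ0) ?_
        refine mul_nonneg hL ?_
        have q1 : 0 ≤ B * h := mul_nonneg hB hh0
        have q2 : 0 ≤ B * ρ * h * ρ :=
          mul_nonneg (mul_nonneg (mul_nonneg hB hρ0) hh0) hρ0
        linarith
      refine le_trans (nIPU hρ0 nU₁ nU₁t hX) (le_of_eq ?_)
      rw [hCΞdef]; ring
    have hres := mvt0 hder hbd (t₀+h) ht₁m
    rw [hzero, sub_zero, add_sub_cancel_left] at hres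
    exact hres
  -- the two normal-component bounds via the ε-condition
  have bG₂ : ‖perpForm U₀ V₁ (A (t₀+h))‖ ≤ (ε + CG * h) * h := by
    have hzero : perpForm U₀ V₁ (A t₀) = 0 := by
      unfold perpForm
      rw [hA₀]
      simp only [Matrix.mul_sub, Matrix.mul_assoc, cancel_orth hU₀]
      abel
    have hder : ∀ t ∈ Set.Icc t₀ (t₀+h),
        HasDerivAt (fun s => perpForm U₀ V₁ (A s)) (perpForm U₀ V₁ (F t (A t))) t :=
      fun t ht => lin_deriv (perpLin U₀ V₁) (hAode t ht)
    have hbd : ∀ t ∈ Set.Icc t₀ (t₀+h), ‖perpForm U₀ V₁ (F t (A t))‖ ≤ ε + CG * h := by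
      intro t ht
      have hZeq : A t₀ * (V₁ * V₁ᵀ) = U₀ * (S₀ * (V₀ᵀ * V₁)) * V₁ᵀ := by
        rw [hA₀]; simp only [Matrix.mul_assoc]
      have heps : ‖perpForm U₀ V₁ (F t (A t₀ * (V₁ * V₁ᵀ)))‖ ≤ ε := by
        rw [perpForm_eq, hZeq]
        exact hFeps t (hsub ht) U₀ (S₀ * (V₀ᵀ * V₁)) V₁ hU₀ hV₁
      have hsplit : perpForm U₀ V₁ (F t (A t))
          = perpForm U₀ V₁ (F t (A t) - F t (A t₀ * (V₁ * V₁ᵀ)))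
            + perpForm U₀ V₁ (F t (A t₀ * (V₁ * V₁ᵀ))) := by
        rw [← perpForm_sub]; abel
      have hdist : ‖A t - A t₀ * (V₁ * V₁ᵀ)‖ ≤ B * h + κ' * h := by
        have := norm_sub_le_norm_sub_add_norm_sub (A t) (A t₀) (A t₀ * (V₁ * V₁ᵀ))
        have q1 := aA t ht
        linarith [c2']
      have hlip : ‖F t (A t) - F t (A t₀ * (V₁ * V₁ᵀ))‖ ≤ L * (B * h + κ' * h) :=
        le_trans (hFlip t (hsub ht) _ _) (mul_le_mul_of_nonneg_left hdist hL)
      have h1 : ‖perpForm U₀ V₁ (F t (A t) - F t (A t₀ * (V₁ * V₁ᵀ)))‖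
          ≤ (1+ρ^2)^2 * (L * (B * h + κ' * h)) :=
        le_trans (perpForm_norm_le hρ0 nU₀ nU₀t nV₁ nV₁t _)
          (mul_le_mul_of_nonneg_left hlip (by positivity))
      calc ‖perpForm U₀ V₁ (F t (A t))‖
          ≤ ‖perpForm U₀ V₁ (F t (A t) - F t (A t₀ * (V₁ * V₁ᵀ)))‖
            + ‖perpForm U₀ V₁ (F t (A t₀ * (V₁ * V₁ᵀ)))‖ := by
            rw [hsplit]; exact norm_add_le _ _
        _ ≤ (1+ρ^2)^2 * (L * (B * h + κ' * h)) + ε := add_le_add h1 heps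
        _ = ε + CG * h := by rw [hCGdef]; ring
    have hres := mvt0 hder hbd (t₀+h) ht₁m
    rw [hzero, sub_zero, add_sub_cancel_left] at hres
    exact hres
  have bG₃ : ‖perpForm U₁ V₀ (A (t₀+h))‖ ≤ (ε + CG * h) * h := by
    have hzero : perpForm U₁ V₀ (A t₀) = 0 := by
      unfold perpForm
      rw [hA₀]
      simp only [Matrix.mul_assoc, cancel_orth hV₀, sub_self, Matrix.mul_zero, sub_zero]
    have hder : ∀ t ∈ Set.Icc t₀ (t₀+h),
        HasDerivAt (fun s => perpForm U₁ V₀ (A s)) (perpForm U₁ V₀ (F t (A t))) t :=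
      fun t ht => lin_deriv (perpLin U₁ V₀) (hAode t ht)
    have hbd : ∀ t ∈ Set.Icc t₀ (t₀+h), ‖perpForm U₁ V₀ (F t (A t))‖ ≤ ε + CG * h := by
      intro t ht
      have hZeq : U₁ * U₁ᵀ * A t₀ = U₁ * ((U₁ᵀ * U₀) * S₀) * V₀ᵀ := by
        rw [hA₀]; simp only [Matrix.mul_assoc]
      have heps : ‖perpForm U₁ V₀ (F t (U₁ * U₁ᵀ * A t₀))‖ ≤ ε := by
        rw [perpForm_eq, hZeq]
        exact hFeps t (hsub ht) U₁ ((U₁ᵀ * U₀) * S₀) V₀ hU₁ hV₀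
      have hsplit : perpForm U₁ V₀ (F t (A t))
          = perpForm U₁ V₀ (F t (A t) - F t (U₁ * U₁ᵀ * A t₀))
            + perpForm U₁ V₀ (F t (U₁ * U₁ᵀ * A t₀)) := by
        rw [← perpForm_sub]; abel
      have hdist : ‖A t - U₁ * U₁ᵀ * A t₀‖ ≤ B * h + κ' * h := by
        have := norm_sub_le_norm_sub_add_norm_sub (A t) (A t₀) (U₁ * U₁ᵀ * A t₀)
        have q1 := aA t ht
        linarith [c1']
      have hlip : ‖F t (A t) - F t (U₁ * U₁ᵀ * A t₀)‖ ≤ L * (B * h + κ' * h) :=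
        le_trans (hFlip t (hsub ht) _ _) (mul_le_mul_of_nonneg_left hdist hL)
      have h1 : ‖perpForm U₁ V₀ (F t (A t) - F t (U₁ * U₁ᵀ * A t₀))‖
          ≤ (1+ρ^2)^2 * (L * (B * h + κ' * h)) :=
        le_trans (perpForm_norm_le hρ0 nU₁ nU₁t nV₀ nV₀t _)
          (mul_le_mul_of_nonneg_left hlip (by positivity))
      calc ‖perpForm U₁ V₀ (F t (A t))‖
          ≤ ‖perpForm U₁ V₀ (F t (A t) - F t (U₁ * U₁ᵀ * A t₀))‖
            + ‖perpForm U₁ V₀ (F t (U₁ * U₁ᵀ * A t₀))‖ := by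
            rw [hsplit]; exact norm_add_le _ _
        _ ≤ (1+ρ^2)^2 * (L * (B * h + κ' * h)) + ε := add_le_add h1 heps
        _ = ε + CG * h := by rw [hCGdef]; ring
    have hres := mvt0 hder hbd (t₀+h) ht₁m
    rw [hzero, sub_zero, add_sub_cancel_left] at hres
    exact hres
  -- the Galerkin-step error
  have bE : ‖U₁ * S (t₀+h) * V₁ᵀ - U₁ * U₁ᵀ * (A (t₀+h) * (V₁ * V₁ᵀ))‖
      ≤ ρ^4 * L * C₂ * h * h := by
    have hzero : U₁ * S t₀ * V₁ᵀ - U₁ * U₁ᵀ * (A t₀ * (V₁ * V₁ᵀ)) = 0 := by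
      rw [hYid]; exact sub_self _
    have hder : ∀ t ∈ Set.Icc t₀ (t₀+h),
        HasDerivAt (fun s => U₁ * S s * V₁ᵀ - U₁ * U₁ᵀ * (A s * (V₁ * V₁ᵀ)))
          (U₁ * (U₁ᵀ * F t (U₁ * S t * V₁ᵀ) * V₁) * V₁ᵀ
            - U₁ * U₁ᵀ * (F t (A t) * (V₁ * V₁ᵀ))) t := fun t ht =>
      (hd_mulR V₁ᵀ (hd_mulL U₁ (hSode t ht))).sub
        (hd_mulL (U₁ * U₁ᵀ) (hd_mulR (V₁ * V₁ᵀ) (hAode t ht)))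
    have hbd : ∀ t ∈ Set.Icc t₀ (t₀+h),
        ‖U₁ * (U₁ᵀ * F t (U₁ * S t * V₁ᵀ) * V₁) * V₁ᵀ
          - U₁ * U₁ᵀ * (F t (A t) * (V₁ * V₁ᵀ))‖ ≤ ρ^4 * L * C₂ * h := by
      intro t ht
      have hkey : U₁ * (U₁ᵀ * F t (U₁ * S t * V₁ᵀ) * V₁) * V₁ᵀ
            - U₁ * U₁ᵀ * (F t (A t) * (V₁ * V₁ᵀ))
          = U₁ * (U₁ᵀ * ((F t (U₁ * S t * V₁ᵀ) - F t (A t)) * (V₁ * V₁ᵀ))) := by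
        rw [Matrix.sub_mul]
        simp only [Matrix.mul_sub, Matrix.mul_assoc]
      rw [hkey]
      have hlip : ‖F t (U₁ * S t * V₁ᵀ) - F t (A t)‖ ≤ L * (C₂ * h) :=
        le_trans (hFlip t (hsub ht) _ _) (mul_le_mul_of_nonneg_left (dYA t ht) hL)
      have h0L : 0 ≤ L * (C₂ * h) := mul_nonneg hL (mul_nonneg hC₂0 hh0)
      refine le_trans
        (nmul nU₁ (nmul nU₁t (nmul hlip (nmul nV₁ nV₁t hρ0) h0L) hρ0) hρ0)
        (le_of_eq ?_)
      ring
    have hres := mvt0 hder hbd (t₀+h) ht₁m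
    rw [hzero, sub_zero, add_sub_cancel_left] at hres
    exact hres
  -- assembly
  have hTa : ‖A (t₀+h) - A (t₀+h) * (V₁ * V₁ᵀ)‖
      ≤ (1+ρ^2) * (CΘ * h * h) + (ε + CG * h) * h := by
    have hid : A (t₀+h) - A (t₀+h) * (V₁ * V₁ᵀ)
        = ((U₀ * U₀ᵀ * A (t₀+h) - U₀ * (Lm (t₀+h))ᵀ)
            - (U₀ * U₀ᵀ * A (t₀+h) - U₀ * (Lm (t₀+h))ᵀ) * (V₁ * V₁ᵀ))
          + perpForm U₀ V₁ (A (t₀+h)) := by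
      unfold perpForm
      rw [hL₁]
      simp only [Matrix.transpose_mul, Matrix.mul_sub, Matrix.sub_mul, Matrix.mul_assoc,
        cancel_orth hV₁]
      abel
    rw [hid]
    refine le_trans (norm_add_le _ _) (add_le_add ?_ bG₂)
    exact nIPV hρ0 nV₁ nV₁t bΘ
  have hTb : ‖A (t₀+h) - U₁ * U₁ᵀ * A (t₀+h)‖ ≤ CΞ * h * h + (ε + CG * h) * h := by
    have hid : A (t₀+h) - U₁ * U₁ᵀ * A (t₀+h)
        = ((A (t₀+h) * (V₀ * V₀ᵀ) - K (t₀+h) * V₀ᵀ)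
            - U₁ * U₁ᵀ * (A (t₀+h) * (V₀ * V₀ᵀ) - K (t₀+h) * V₀ᵀ))
          + perpForm U₁ V₀ (A (t₀+h)) := by
      unfold perpForm
      rw [hK₁]
      simp only [Matrix.mul_sub, Matrix.sub_mul, Matrix.mul_assoc, cancel_orth hU₁]
      abel
    rw [hid]
    exact le_trans (norm_add_le _ _) (add_le_add bΞ bG₃)
  have hTb' : ‖(A (t₀+h) - U₁ * U₁ᵀ * A (t₀+h)) * (V₁ * V₁ᵀ)‖
      ≤ ρ^2 * (CΞ * h * h + (ε + CG * h) * h) := nPV hρ0 nV₁ nV₁t hTb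
  have hfin : Y₁ - A (t₀+h)
      = (U₁ * S (t₀+h) * V₁ᵀ - U₁ * U₁ᵀ * (A (t₀+h) * (V₁ * V₁ᵀ)))
        - ((A (t₀+h) - A (t₀+h) * (V₁ * V₁ᵀ))
          + (A (t₀+h) - U₁ * U₁ᵀ * A (t₀+h)) * (V₁ * V₁ᵀ)) := by
    rw [hY₁]
    simp only [Matrix.sub_mul, Matrix.mul_sub, Matrix.mul_assoc]
    abel
  rw [hfin]
  calc ‖(U₁ * S (t₀+h) * V₁ᵀ - U₁ * U₁ᵀ * (A (t₀+h) * (V₁ * V₁ᵀ)))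
        - ((A (t₀+h) - A (t₀+h) * (V₁ * V₁ᵀ))
          + (A (t₀+h) - U₁ * U₁ᵀ * A (t₀+h)) * (V₁ * V₁ᵀ))‖
      ≤ ‖U₁ * S (t₀+h) * V₁ᵀ - U₁ * U₁ᵀ * (A (t₀+h) * (V₁ * V₁ᵀ))‖
        + ‖(A (t₀+h) - A (t₀+h) * (V₁ * V₁ᵀ))
          + (A (t₀+h) - U₁ * U₁ᵀ * A (t₀+h)) * (V₁ * V₁ᵀ)‖ := norm_sub_le _ _
    _ ≤ ρ^4 * L * C₂ * h * h
        + (((1+ρ^2) * (CΘ * h * h) + (ε + CG * h) * h)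
          + ρ^2 * (CΞ * h * h + (ε + CG * h) * h)) := by
        have htr := norm_add_le (A (t₀+h) - A (t₀+h) * (V₁ * V₁ᵀ))
          ((A (t₀+h) - U₁ * U₁ᵀ * A (t₀+h)) * (V₁ * V₁ᵀ))
        linarith [bE, hTa, hTb']
    _ = h * ((1+ρ^2) * ε
        + (ρ^4*L*C₂ + (1+ρ^2)*CΘ + CG + ρ^2*CΞ + ρ^2*CG) * h) := by ring
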